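/- arXiv:1605.07016 — 6 statements merged into one kernel-verified Lean document; each statement's English description precedes it below -/
import Mathlib

section
/- Let G be a connected graph of order n ≥ 3 and v a vertex of G. Then D(G) − 1 ≤ D(G − v) ≤ 2·D(G), where G − v is the graph obtained by deleting v and all edges incident to v. -/
open SimpleGraph

/-- Distinguishing number: least `d` admitting a vertex labeling with `d` labels
preserved only by the identity automorphism. -/
noncomputable def distNum {V : Type*} (G : SimpleGraph V) : ℕ :=
  sInf {d : ℕ | ∃ f : V → Fin d,
    ∀ φ : G ≃g G, (∀ x : V, f (φ x) = f x) → ∀ x : V, φ x = x}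

/-- Distinguishing index: least `d` admitting an edge coloring with `d` colors
preserved only by the identity automorphism. -/
noncomputable def distIdx {V : Type*} (G : SimpleGraph V) : ℕ :=
  sInf {d : ℕ | ∃ f : Sym2 V → Fin d,
    ∀ φ : G ≃g G, (∀ e ∈ G.edgeSet, f (Sym2.map φ e) = f e) → ∀ x : V, φ x = x}

/-- `G ⊙ v`: remove all edges joining two neighbors of `v`. -/
def SimpleGraph.odot {V : Type*} (G : SimpleGraph V) (v : V) : SimpleGraph V :=
  G.deleteEdges {e | ∀ x ∈ e, G.Adj v x}

/-- Vertex contraction `G ∘ v`: delete `v` and put a clique on its neighborhood. -/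
def SimpleGraph.vContract {V : Type*} (G : SimpleGraph V) (v : V) :
    SimpleGraph {u : V // u ≠ v} where
  Adj x y := x ≠ y ∧ (G.Adj x.1 y.1 ∨ (G.Adj v x.1 ∧ G.Adj v y.1))
  symm := by
    constructor
    rintro x y ⟨h1, h2 | ⟨h3, h4⟩⟩
    exacts [⟨h1.symm, Or.inl h2.symm⟩, ⟨h1.symm, Or.inr ⟨h4, h3⟩⟩]
  loopless := ⟨fun x h => h.1 rfl⟩

/-- Edge contraction `G ∘ e` for `e = uv`: merge `v` into `u`. -/
def SimpleGraph.eContract {V : Type*} (G : SimpleGraph V) (u v : V) :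
    SimpleGraph {x : V // x ≠ v} where
  Adj x y := x ≠ y ∧ (G.Adj x.1 y.1 ∨ (x.1 = u ∧ G.Adj v y.1) ∨ (y.1 = u ∧ G.Adj v x.1))
  symm := by
    constructor
    rintro x y ⟨h1, h2⟩
    refine ⟨h1.symm, ?_⟩
    rcases h2 with h | ⟨ha, hb⟩ | ⟨ha, hb⟩
    · exact Or.inl h.symm
    · exact Or.inr (Or.inr ⟨ha, hb⟩)
    · exact Or.inr (Or.inl ⟨ha, hb⟩)
  loopless := ⟨fun x h => h.1 rfl⟩

/-- The star `K_{1,n}`. -/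
def starG (n : ℕ) : SimpleGraph (Fin 1 ⊕ Fin n) := completeBipartiteGraph (Fin 1) (Fin n)

/-- The friendship graph `F_n = K_1 + n K_2`; `none` is the central vertex. -/
def friendshipGraph (n : ℕ) : SimpleGraph (Option (Fin n × Fin 2)) where
  Adj x y := x ≠ y ∧ (x = none ∨ y = none ∨ ∃ i a b, x = some (i, a) ∧ y = some (i, b))
  symm := by
    constructor
    rintro x y ⟨h1, h2⟩
    refine ⟨h1.symm, ?_⟩
    rcases h2 with h | h | ⟨i, a, b, hx, hy⟩
    · exact Or.inr (Or.inl h)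
    · exact Or.inl h
    · exact Or.inr (Or.inr ⟨i, b, a, hy, hx⟩)
  loopless := ⟨fun x h => h.1 rfl⟩

/-- `K_1 + (K_2 ∪ (n-2) K_1)` on `Fin (n+1)`: vertex `0` is the join apex,
vertices `1, 2` form the `K_2`, the rest are the isolated vertices. -/
def joinGraph (n : ℕ) : SimpleGraph (Fin (n + 1)) where
  Adj x y := x ≠ y ∧ (x = 0 ∨ y = 0 ∨ ((x = 1 ∨ x = 2) ∧ (y = 1 ∨ y = 2)))
  symm := by constructor; rintro x y ⟨h1, h2⟩; exact ⟨h1.symm, by tauto⟩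
  loopless := ⟨fun x h => h.1 rfl⟩

private lemma distSet_nonempty {W : Type*} [Fintype W] (H : SimpleGraph W) :
    {d : ℕ | ∃ f : W → Fin d,
      ∀ φ : H ≃g H, (∀ x : W, f (φ x) = f x) → ∀ x : W, φ x = x}.Nonempty :=
  ⟨Fintype.card W, ⇑(Fintype.equivFin W),
    fun _ h x => (Fintype.equivFin W).injective (h x)⟩

private lemma distNum_mem {W : Type*} [Fintype W] (H : SimpleGraph W) :
    ∃ f : W → Fin (distNum H),
      ∀ φ : H ≃g H, (∀ x : W, f (φ x) = f x) → ∀ x : W, φ x = x :=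
  Nat.sInf_mem (distSet_nonempty H)

theorem stmt0 {V : Type*} [Fintype V] (G : SimpleGraph V) (hc : G.Connected)
    (hn : 3 ≤ Fintype.card V) (v : V) :
    distNum G - 1 ≤ distNum (G.induce {u | u ≠ v}) ∧
      distNum (G.induce {u | u ≠ v}) ≤ 2 * distNum G := by
  classical
  letI : Fintype ↑{u : V | u ≠ v} := Fintype.ofFinite _
  obtain ⟨f, hf⟩ := distNum_mem G
  obtain ⟨g, hg⟩ := distNum_mem (G.induce {u | u ≠ v})
  constructor
  · -- lower bound: distNum G ≤ distNum (G - v) + 1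
    have h1 : distNum G ≤ distNum (G.induce {u | u ≠ v}) + 1 := by
      apply Nat.sInf_le
      refine ⟨fun u => if h : u ≠ v then (g ⟨u, h⟩).castSucc else Fin.last _, ?_⟩
      intro φ hφ
      have hv : φ v = v := by
        by_contra hne
        have h2 := hφ v
        beta_reduce at h2
        rw [dif_pos hne, dif_neg (not_not_intro (rfl : v = v))] at h2
        exact (Fin.castSucc_lt_last _).ne h2
      have hne : ∀ u : {u : V // u ≠ v}, φ u.1 ≠ v := fun u h =>
        u.2 (φ.injective (h.trans hv.symm))
      have hne' : ∀ u : {u : V // u ≠ v}, φ.symm u.1 ≠ v := fun u h =>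
        u.2 (by rw [← φ.apply_symm_apply u.1, h, hv])
      let ψ : G.induce {u | u ≠ v} ≃g G.induce {u | u ≠ v} :=
        { toFun := fun u => ⟨φ u.1, hne u⟩
          invFun := fun u => ⟨φ.symm u.1, hne' u⟩
          left_inv := fun u => Subtype.ext (by simp)
          right_inv := fun u => Subtype.ext (by simp)
          map_rel_iff' := by intro a b; exact φ.map_rel_iff }
      have hψ : ∀ x, ψ x = x := by
        apply hg
        intro u
        have h3 := hφ u.1
        beta_reduce at h3
        have hu : (u : V) ≠ v := u.2
        rw [dif_pos (hne u), dif_pos hu] at h3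
        exact Fin.castSucc_injective _ h3
      intro x
      by_cases hx : x = v
      · rw [hx, hv]
      · exact congrArg Subtype.val (hψ ⟨x, hx⟩)
    omega
  · -- upper bound
    apply Nat.sInf_le
    refine ⟨fun u => finProdFinEquiv ((if G.Adj v u.1 then 0 else 1 : Fin 2), f u.1), ?_⟩
    intro ψ hψ
    have key : ∀ u : {u : V // u ≠ v},
        f (ψ u).1 = f u.1 ∧ (G.Adj v (ψ u).1 ↔ G.Adj v u.1) := by
      intro u
      have h := finProdFinEquiv.injective (hψ u)
      have h1 : (if G.Adj v (ψ u).1 then (0 : Fin 2) else 1)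
          = (if G.Adj v u.1 then (0 : Fin 2) else 1) := congrArg Prod.fst h
      have h2 : f (ψ u).1 = f u.1 := congrArg Prod.snd h
      refine ⟨h2, ?_⟩
      constructor
      · intro hb
        by_contra ha
        rw [if_pos hb, if_neg ha] at h1
        exact absurd h1 (by decide)
      · intro ha
        by_contra hb
        rw [if_neg hb, if_pos ha] at h1
        exact absurd h1 (by decide)
    have hvne : ∀ u : V, ∀ h : u ≠ v, (ψ ⟨u, h⟩).1 ≠ v := fun u h => (ψ ⟨u, h⟩).2
    have hvne' : ∀ u : V, ∀ h : u ≠ v, (ψ.symm ⟨u, h⟩).1 ≠ v :=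
      fun u h => (ψ.symm ⟨u, h⟩).2
    let φ : G ≃g G :=
      { toFun := fun u => if h : u ≠ v then (ψ ⟨u, h⟩).1 else v
        invFun := fun u => if h : u ≠ v then (ψ.symm ⟨u, h⟩).1 else v
        left_inv := by
          intro u
          beta_reduce
          by_cases h : u ≠ v
          · rw [dif_pos h, dif_pos (hvne u h)]
            have e : (⟨(ψ ⟨u, h⟩).1, hvne u h⟩ : {u : V // u ≠ v}) = ψ ⟨u, h⟩ :=
              Subtype.ext rfl
            rw [e]
            exact congrArg Subtype.val (ψ.toEquiv.symm_apply_apply _)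
          · rw [not_not.mp h, dif_neg (not_not_intro (rfl : v = v)),
              dif_neg (not_not_intro (rfl : v = v))]
        right_inv := by
          intro u
          beta_reduce
          by_cases h : u ≠ v
          · rw [dif_pos h, dif_pos (hvne' u h)]
            have e : (⟨(ψ.symm ⟨u, h⟩).1, hvne' u h⟩ : {u : V // u ≠ v}) = ψ.symm ⟨u, h⟩ :=
              Subtype.ext rfl
            rw [e]
            exact congrArg Subtype.val (ψ.toEquiv.apply_symm_apply _)
          · rw [not_not.mp h, dif_neg (not_not_intro (rfl : v = v)),
              dif_neg (not_not_intro (rfl : v = v))]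
        map_rel_iff' := by
          intro a b
          simp only [Equiv.coe_fn_mk]
          beta_reduce
          by_cases ha : a ≠ v <;> by_cases hb : b ≠ v
          · rw [dif_pos ha, dif_pos hb]
            exact ψ.map_rel_iff (a := ⟨a, ha⟩) (b := ⟨b, hb⟩)
          · rw [not_not.mp hb, dif_pos ha, dif_neg (not_not_intro (rfl : v = v))]
            rw [adj_comm, adj_comm _ a]
            exact (key ⟨a, ha⟩).2
          · rw [not_not.mp ha, dif_pos hb, dif_neg (not_not_intro (rfl : v = v))]
            exact (key ⟨b, hb⟩).2
          · rw [not_not.mp ha, not_not.mp hb, dif_neg (not_not_intro (rfl : v = v))] }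
    have hφ : ∀ x, φ x = x := by
      apply hf
      intro u
      show f (if h : u ≠ v then (ψ ⟨u, h⟩).1 else v) = f u
      by_cases h : u ≠ v
      · rw [dif_pos h]; exact (key ⟨u, h⟩).1
      · rw [dif_neg h, not_not.mp h]
    intro x
    have h2 : (if h : x.1 ≠ v then (ψ ⟨x.1, h⟩).1 else v) = x.1 := hφ x.1
    have hx : (x : V) ≠ v := x.2
    rw [dif_pos hx] at h2
    exact Subtype.ext (by simpa using h2)
end

section
/- For every connected graph G and every edge e of G, |D(G − e) − D(G)| ≤ 2, where G − e is the graph obtained from G by deleting the edge e. -/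
open SimpleGraph

lemma distNum_set_nonempty {V : Type*} [Fintype V] (G : SimpleGraph V) :
    {d : ℕ | ∃ f : V → Fin d,
      ∀ φ : G ≃g G, (∀ x : V, f (φ x) = f x) → ∀ x : V, φ x = x}.Nonempty := by
  refine ⟨Fintype.card V, Fintype.equivFin V, fun φ hφ x => ?_⟩
  exact (Fintype.equivFin V).injective (hφ x)

lemma mem_distNum_set {V : Type*} (G H : SimpleGraph V) (u v : V) (huv : u ≠ v)
    (hmap : ∀ φ : H ≃g H, φ u = u → φ v = v →
      ∀ x y : V, G.Adj (φ x) (φ y) ↔ G.Adj x y)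
    (d : ℕ) (f : V → Fin d)
    (hf : ∀ φ : G ≃g G, (∀ x : V, f (φ x) = f x) → ∀ x : V, φ x = x) :
    (d + 2) ∈ {k : ℕ | ∃ g : V → Fin k,
      ∀ φ : H ≃g H, (∀ x : V, g (φ x) = g x) → ∀ x : V, φ x = x} := by
  classical
  set g : V → Fin (d + 2) := fun x =>
    if x = u then ⟨d, by omega⟩ else if x = v then ⟨d + 1, by omega⟩
    else ⟨(f x).1, by have := (f x).2; omega⟩ with hg
  have gval : ∀ x : V, (g x : ℕ) =
      if x = u then d else if x = v then d + 1 else (f x).1 := by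
    intro x
    simp only [hg]
    split_ifs <;> rfl
  refine ⟨g, fun φ hφ => ?_⟩
  have hu : φ u = u := by
    by_contra h
    have h0 := congrArg Fin.val (hφ u)
    rw [gval, gval, if_pos rfl, if_neg h] at h0
    split_ifs at h0 with h2
    · omega
    · have := (f (φ u)).2
      omega
  have hv : φ v = v := by
    by_contra h
    have h0 := congrArg Fin.val (hφ v)
    rw [gval, gval, if_neg (Ne.symm huv), if_pos rfl] at h0
    split_ifs at h0 with h1
    · omega
    · have := (f (φ v)).2
      omega
  let ψ : G ≃g G := { toEquiv := φ.toEquiv, map_rel_iff' := fun {a b} => hmap φ hu hv a b }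
  refine hf ψ fun x => ?_
  show f (φ x) = f x
  by_cases hxu : x = u
  · rw [hxu, hu]
  by_cases hxv : x = v
  · rw [hxv, hv]
  have h1 : φ x ≠ u := fun h => hxu (φ.injective (h.trans hu.symm))
  have h2 : φ x ≠ v := fun h => hxv (φ.injective (h.trans hv.symm))
  have h0 := congrArg Fin.val (hφ x)
  rw [gval, gval, if_neg h1, if_neg h2, if_neg hxu, if_neg hxv] at h0
  exact Fin.ext h0

lemma distNum_key {V : Type*} [Fintype V] (G H : SimpleGraph V) (u v : V) (huv : u ≠ v)
    (hmap : ∀ φ : H ≃g H, φ u = u → φ v = v →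
      ∀ x y : V, G.Adj (φ x) (φ y) ↔ G.Adj x y) :
    distNum H ≤ distNum G + 2 := by
  obtain ⟨f, hf⟩ := Nat.sInf_mem (distNum_set_nonempty G)
  exact Nat.sInf_le (mem_distNum_set G H u v huv hmap (distNum G) f hf)

lemma sym2_eq_iff_of_fix {V : Type*} {φ : V → V} (hinj : Function.Injective φ)
    {u v : V} (hu : φ u = u) (hv : φ v = v) (x y : V) :
    s(φ x, φ y) = s(u, v) ↔ s(x, y) = s(u, v) := by
  simp only [Sym2.eq_iff]
  constructor
  · rintro (⟨h1, h2⟩ | ⟨h1, h2⟩)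
    · exact Or.inl ⟨hinj (h1.trans hu.symm), hinj (h2.trans hv.symm)⟩
    · exact Or.inr ⟨hinj (h1.trans hv.symm), hinj (h2.trans hu.symm)⟩
  · rintro (⟨rfl, rfl⟩ | ⟨rfl, rfl⟩)
    · exact Or.inl ⟨hu, hv⟩
    · exact Or.inr ⟨hv, hu⟩

theorem stmt4 {V : Type*} [Fintype V] (G : SimpleGraph V) (hc : G.Connected)
    (e : Sym2 V) (he : e ∈ G.edgeSet) :
    |(distNum (G.deleteEdges {e}) : ℤ) - (distNum G : ℤ)| ≤ 2 := by
  induction e using Sym2.ind with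
  | _ u v =>
  have hadj : G.Adj u v := he
  have huv : u ≠ v := hadj.ne
  set G' := G.deleteEdges {s(u, v)} with hG'
  have hG'adj : ∀ x y : V, G'.Adj x y ↔ G.Adj x y ∧ s(x, y) ≠ s(u, v) := by
    intro x y
    simp [hG', SimpleGraph.deleteEdges_adj]
  -- direction 1: distNum G' ≤ distNum G + 2
  have h1 : distNum G' ≤ distNum G + 2 := by
    refine distNum_key G G' u v huv fun φ hu hv x y => ?_
    by_cases hs : s(x, y) = s(u, v)
    · have hs' : s(φ x, φ y) = s(u, v) :=
        (sym2_eq_iff_of_fix φ.injective hu hv x y).mpr hs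
      rcases Sym2.eq_iff.mp hs with ⟨rfl, rfl⟩ | ⟨rfl, rfl⟩ <;>
        rcases Sym2.eq_iff.mp hs' with ⟨h1, h2⟩ | ⟨h1, h2⟩ <;>
        rw [h1, h2] <;> simp [hadj, hadj.symm]
    · have hs' : s(φ x, φ y) ≠ s(u, v) := fun h =>
        hs ((sym2_eq_iff_of_fix φ.injective hu hv x y).mp h)
      have := φ.map_rel_iff (a := x) (b := y)
      rw [hG'adj, hG'adj] at this
      constructor
      · intro h
        exact (this.mp ⟨h, hs'⟩).1
      · intro h
        exact (this.mpr ⟨h, hs⟩).1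
  -- direction 2: distNum G ≤ distNum G' + 2
  have h2 : distNum G ≤ distNum G' + 2 := by
    refine distNum_key G' G u v huv fun φ hu hv x y => ?_
    rw [hG'adj, hG'adj, φ.map_rel_iff]
    simp only [ne_eq, sym2_eq_iff_of_fix φ.injective hu hv]
  rw [abs_sub_le_iff]
  constructor <;> push_cast <;> omega
end

section
/- Let G be a connected graph of order n and v a vertex of G. Then D(G) − 1 ≤ D(G ⊙ v), where G ⊙ v is the graph obtained from G by removing all edges between any pair of neighbors of v (the vertex v is not removed). -/
open SimpleGraph

theorem stmt8 {V : Type*} [Fintype V] (G : SimpleGraph V) (hc : G.Connected) (v : V) :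
    distNum G - 1 ≤ distNum (G.odot v) := by
  classical
  have hne : {d : ℕ | ∃ f : V → Fin d,
      ∀ φ : (G.odot v) ≃g (G.odot v), (∀ x : V, f (φ x) = f x) → ∀ x : V, φ x = x}.Nonempty :=
    ⟨Fintype.card V, Fintype.equivFin V, fun φ h x => (Fintype.equivFin V).injective (h x)⟩
  obtain ⟨f, hf⟩ : ∃ f : V → Fin (distNum (G.odot v)),
      ∀ φ : (G.odot v) ≃g (G.odot v), (∀ x : V, f (φ x) = f x) → ∀ x : V, φ x = x :=
    Nat.sInf_mem hne
  have key : ∀ a b, (G.odot v).Adj a b ↔ G.Adj a b ∧ ¬(G.Adj v a ∧ G.Adj v b) := by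
    intro a b
    simp [SimpleGraph.odot, deleteEdges_adj, Sym2.mem_iff]
  have hmem : distNum (G.odot v) + 1 ∈ {d : ℕ | ∃ f : V → Fin d,
      ∀ φ : G ≃g G, (∀ x : V, f (φ x) = f x) → ∀ x : V, φ x = x} := by
    refine ⟨fun x => if x = v then Fin.last _ else (f x).castSucc, fun φ hφ => ?_⟩
    have hv : φ v = v := by
      by_contra h
      have h2 := hφ v
      simp only [if_pos rfl, if_neg h] at h2
      exact absurd h2 (Fin.castSucc_lt_last _).ne
    have hnev : ∀ x, x ≠ v → φ x ≠ v := by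
      intro x hx h
      exact hx (φ.toEquiv.injective (h.trans hv.symm))
    let ψ : (G.odot v) ≃g (G.odot v) :=
      ⟨φ.toEquiv, by
        intro a b
        rw [key, key]
        have ha : G.Adj v (φ a) ↔ G.Adj v a := by
          conv_lhs => rw [← hv]
          exact φ.map_adj_iff
        have hb : G.Adj v (φ b) ↔ G.Adj v b := by
          conv_lhs => rw [← hv]
          exact φ.map_adj_iff
        exact and_congr φ.map_adj_iff (not_congr (and_congr ha hb))⟩
    refine hf ψ (fun x => ?_)
    by_cases hx : x = v
    · show f (φ x) = f x; rw [hx, hv]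
    · have h2 := hφ x
      simp only [if_neg hx, if_neg (hnev x hx)] at h2
      exact Fin.castSucc_injective _ h2
  have h3 : distNum G ≤ distNum (G.odot v) + 1 := Nat.sInf_le hmem
  omega
end

section
/- Let G be a connected graph of order n and v a vertex of G. Then D'(G) − 1 ≤ D'(G ⊙ v), where G ⊙ v is the graph obtained from G by removing all edges between any pair of neighbors of v. -/
open SimpleGraph

lemma odot_adj' {V : Type*} (G : SimpleGraph V) (v a b : V) :
    (G.odot v).Adj a b ↔ G.Adj a b ∧ ¬(G.Adj v a ∧ G.Adj v b) := by
  simp [SimpleGraph.odot, SimpleGraph.deleteEdges_adj, Sym2.mem_iff, or_imp, forall_and, not_and]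


lemma odot_connected (G : SimpleGraph V) (hc : G.Connected) (v : V) :
    (G.odot v).Connected := by
  rw [connected_iff] at hc ⊢
  refine ⟨fun a b => ?_, hc.2⟩
  obtain ⟨w⟩ := hc.1 a b
  induction w with
  | nil => exact Reachable.refl _
  | @cons a c b h p ih =>
    refine Reachable.trans ?_ ih
    by_cases hd : G.Adj v a ∧ G.Adj v c
    · have h1 : (G.odot v).Adj a v := by
        rw [odot_adj']
        exact ⟨hd.1.symm, fun hcc => G.loopless.irrefl v hcc.2⟩
      have h2 : (G.odot v).Adj v c := by
        rw [odot_adj']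
        exact ⟨hd.2, fun hcc => G.loopless.irrefl v hcc.1⟩
      exact h1.reachable.trans h2.reachable
    · exact Adj.reachable ((odot_adj' G v a c).2 ⟨h, hd⟩)

lemma extend_coloring {V : Type*} (G : SimpleGraph V) (v : V) {d : ℕ}
    (f : Sym2 V → Fin d)
    (hf : ∀ φ : (G.odot v) ≃g (G.odot v),
      (∀ e ∈ (G.odot v).edgeSet, f (Sym2.map φ e) = f e) → ∀ x : V, φ x = x) :
    ∃ g : Sym2 V → Fin (d + 1),
      ∀ φ : G ≃g G, (∀ e ∈ G.edgeSet, g (Sym2.map φ e) = g e) → ∀ x : V, φ x = x := by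
  classical
  set del : Sym2 V → Prop := fun e => ∀ x ∈ e, G.Adj v x with hdeldef
  have hdel : ∀ a b : V, del s(a, b) ↔ G.Adj v a ∧ G.Adj v b := by
    intro a b
    simp [hdeldef, Sym2.mem_iff, or_imp, forall_and]
  refine ⟨fun e => if del e then Fin.last d else (f e).castSucc, ?_⟩
  intro φ hφ
  set g : Sym2 V → Fin (d + 1) := fun e => if del e then Fin.last d else (f e).castSucc with hg
  have hcs : ∀ e, ¬ del e → g e = (f e).castSucc := fun e h => if_neg h
  have hlast : ∀ e, del e → g e = Fin.last d := fun e h => if_pos h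
  have hne : ∀ e, ¬ del e → g e ≠ Fin.last d := by
    intro e h
    rw [hcs e h]
    exact Fin.ne_of_lt (Fin.castSucc_lt_last _)
  have key : ∀ a b : V, G.Adj a b → g s(φ a, φ b) = g s(a, b) := by
    intro a b hab
    have := hφ s(a, b) hab
    rwa [Sym2.map_pair_eq] at this
  -- φ maps odot-edges to odot-edges
  have A : ∀ a b : V, (G.odot v).Adj a b → (G.odot v).Adj (φ a) (φ b) := by
    intro a b hab
    rw [odot_adj'] at hab ⊢
    obtain ⟨h1, h2⟩ := hab
    refine ⟨φ.map_rel_iff.2 h1, fun hcc => ?_⟩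
    have e1 := key a b h1
    rw [hcs _ (fun h => h2 ((hdel a b).1 h)), hlast _ ((hdel _ _).2 hcc)] at e1
    exact Fin.ne_of_lt (Fin.castSucc_lt_last _) e1.symm
  have ψmapiff : ∀ a b : V, (G.odot v).Adj (φ a) (φ b) ↔ (G.odot v).Adj a b := by
    intro a b
    refine ⟨fun hab => ?_, A a b⟩
    rw [odot_adj'] at hab ⊢
    obtain ⟨h1, h2⟩ := hab
    have h1' : G.Adj a b := φ.map_rel_iff.1 h1
    refine ⟨h1', fun hcc => ?_⟩
    have e1 := key a b h1'
    rw [hlast _ ((hdel _ _).2 hcc), hcs _ (fun h => h2 ((hdel _ _).1 h))] at e1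
    exact Fin.ne_of_lt (Fin.castSucc_lt_last _) e1
  let ψ : (G.odot v) ≃g (G.odot v) := ⟨φ.toEquiv, by intro a b; exact ψmapiff a b⟩
  have hψf : ∀ e ∈ (G.odot v).edgeSet, f (Sym2.map ψ e) = f e := by
    intro e he
    induction e with
    | _ a b =>
      have hab : (G.odot v).Adj a b := he
      have hab' := A a b hab
      have hGab : G.Adj a b := ((odot_adj' G v a b).1 hab).1
      have e1 := key a b hGab
      rw [hcs _ (fun h => ((odot_adj' G v a b).1 hab).2 ((hdel _ _).1 h)),
        hcs _ (fun h => ((odot_adj' G v _ _).1 hab').2 ((hdel _ _).1 h))] at e1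
      have : f s(φ a, φ b) = f s(a, b) := Fin.castSucc_injective _ e1
      show f (Sym2.map ψ s(a, b)) = f s(a, b)
      rw [Sym2.map_pair_eq]
      exact this
  intro x
  exact hf ψ hψf x

lemma nonempty_odot_set {V : Type*} [Fintype V] (G : SimpleGraph V) (hc : G.Connected) (v : V)
    (hS : {d : ℕ | ∃ f : Sym2 V → Fin d,
      ∀ φ : G ≃g G, (∀ e ∈ G.edgeSet, f (Sym2.map φ e) = f e) → ∀ x : V, φ x = x}.Nonempty) :
    {d : ℕ | ∃ f : Sym2 V → Fin (d),
      ∀ φ : (G.odot v) ≃g (G.odot v),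
        (∀ e ∈ (G.odot v).edgeSet, f (Sym2.map φ e) = f e) → ∀ x : V, φ x = x}.Nonempty := by
  classical
  obtain ⟨d0, f0, hf0⟩ := hS
  set H := G.odot v with hH
  have hHc : H.Connected := odot_connected G hc v
  refine ⟨Fintype.card (Sym2 V), ⟨Fintype.equivFin (Sym2 V), ?_⟩⟩
  intro φ hφ
  -- colors injective, so every edge is fixed setwise
  have hfix : ∀ e ∈ H.edgeSet, Sym2.map φ e = e := by
    intro e he
    exact (Fintype.equivFin (Sym2 V)).injective (hφ e he)
  by_contra hx0
  push_neg at hx0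
  obtain ⟨x, hx⟩ := hx0
  -- every neighbor of a moved vertex is its image
  have claim : ∀ a : V, φ a ≠ a → ∀ z : V, H.Adj a z → φ a = z := by
    intro a ha z hz
    have := hfix s(a, z) hz
    rw [Sym2.map_pair_eq, Sym2.eq_iff] at this
    rcases this with ⟨h1, _⟩ | ⟨h1, _⟩
    · exact absurd h1 ha
    · exact h1
  -- x has a neighbor
  obtain ⟨w⟩ := hHc.preconnected x (φ x)
  have hwn : ¬ w.Nil := SimpleGraph.Walk.not_nil_of_ne (Ne.symm hx)
  set y := w.getVert 1 with hy
  have hadj : H.Adj x y := w.adj_snd hwn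
  have hxy : x ≠ y := hadj.ne
  have hφx : φ x = y := claim x hx y hadj
  have hφy : φ y = x := by
    have := hfix s(x, y) hadj
    rw [Sym2.map_pair_eq, Sym2.eq_iff] at this
    rcases this with ⟨h1, _⟩ | ⟨_, h2⟩
    · exact absurd h1 hx
    · exact h2
  -- every vertex is x or y
  have nbrx : ∀ z : V, H.Adj x z → z = y := fun z hz => (claim x hx z hz).symm.trans hφx
  have nbry : ∀ z : V, H.Adj y z → z = x := by
    intro z hz
    have hy' : φ y ≠ y := by rw [hφy]; exact hxy
    exact (claim y hy' z hz).symm.trans hφy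
  have key : ∀ u : V, u = x ∨ u = y := by
    have main : ∀ (a b : V) (_ : H.Walk a b), a = x ∨ a = y → b = x ∨ b = y := by
      intro a b p
      induction p with
      | nil => exact id
      | @cons a c b h p ih =>
        intro ha
        apply ih
        rcases ha with rfl | rfl
        · exact Or.inr (nbrx c h)
        · exact Or.inl (nbry c h)
    intro u
    obtain ⟨p⟩ := hHc.preconnected x u
    exact main x u p (Or.inl rfl)
  -- build the swap automorphism of G
  have hGxy : G.Adj x y := ((odot_adj' G v x y).1 hadj).1
  have swaprel : ∀ a b : V, G.Adj (Equiv.swap x y a) (Equiv.swap x y b) ↔ G.Adj a b := by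
    intro a b
    rcases key a with rfl | rfl <;> rcases key b with rfl | rfl <;>
      simp [Equiv.swap_apply_left, Equiv.swap_apply_right, G.adj_comm]
  let σ : G ≃g G := ⟨Equiv.swap x y, by intro a b; exact swaprel a b⟩
  have hσf : ∀ e ∈ G.edgeSet, (f0 : Sym2 V → Fin d0) (Sym2.map σ e) = f0 e := by
    intro e he
    induction e with
    | _ a b =>
      have hab : G.Adj a b := he
      have hmape : Sym2.map σ s(a, b) = s(a, b) := by
        have hσ : ∀ u : V, σ u = Equiv.swap x y u := fun u => rfl
        rw [Sym2.map_pair_eq, hσ, hσ]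
        rcases key a with ha | ha <;> rcases key b with hb | hb <;> rw [ha, hb]
        · exact absurd (ha.trans hb.symm) hab.ne
        · rw [Equiv.swap_apply_left, Equiv.swap_apply_right, Sym2.eq_swap]
        · rw [Equiv.swap_apply_right, Equiv.swap_apply_left, Sym2.eq_swap]
        · exact absurd (ha.trans hb.symm) hab.ne
      rw [hmape]
  have := hf0 σ hσf x
  have : Equiv.swap x y x = x := this
  rw [Equiv.swap_apply_left] at this
  exact hxy this.symm


theorem stmt9 {V : Type*} [Fintype V] (G : SimpleGraph V) (hc : G.Connected) (v : V) :
    distIdx G - 1 ≤ distIdx (G.odot v) := by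
  classical
  set T := {d : ℕ | ∃ f : Sym2 V → Fin d,
    ∀ φ : (G.odot v) ≃g (G.odot v),
      (∀ e ∈ (G.odot v).edgeSet, f (Sym2.map φ e) = f e) → ∀ x : V, φ x = x} with hT
  by_cases hne : T.Nonempty
  · obtain ⟨f, hf⟩ := Nat.sInf_mem hne
    obtain ⟨g, hg⟩ := extend_coloring G v f hf
    have h1 : distIdx G ≤ sInf T + 1 := Nat.sInf_le ⟨g, hg⟩
    have h2 : distIdx (G.odot v) = sInf T := rfl
    omega
  · have hS : ¬ ({d : ℕ | ∃ f : Sym2 V → Fin d,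
        ∀ φ : G ≃g G, (∀ e ∈ G.edgeSet, f (Sym2.map φ e) = f e) → ∀ x : V,
          φ x = x}.Nonempty) :=
      fun h => hne (nonempty_odot_set G hc v h)
    rw [Set.not_nonempty_iff_eq_empty] at hS
    have : distIdx G = 0 := by
      show sInf _ = 0
      rw [hS, Nat.sInf_empty]
    omega
end

section
/- Let G be a connected graph of order n ≥ 2 and v a vertex of G. Then D(G) − 1 ≤ D(G ∘ v), where G ∘ v is the vertex contraction of v: delete v and add all edges between every pair of neighbors of v (so that the neighborhood of v becomes a clique). -/
open SimpleGraph

theorem stmt14 {V : Type*} [Fintype V] (G : SimpleGraph V) (hc : G.Connected)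
    (hn : 2 ≤ Fintype.card V) (v : V) :
    distNum G - 1 ≤ distNum (G.vContract v) := by

  classical
  set d := distNum (G.vContract v) with hd
  -- the defining set for the contracted graph is nonempty, so sInf is a member
  have hne : Set.Nonempty {d : ℕ | ∃ f : {u : V // u ≠ v} → Fin d,
      ∀ φ : (G.vContract v) ≃g (G.vContract v), (∀ x, f (φ x) = f x) → ∀ x, φ x = x} := by
    refine ⟨Fintype.card {u : V // u ≠ v}, Fintype.equivFin _, fun φ h x => ?_⟩
    exact (Fintype.equivFin _).injective (h x)
  obtain ⟨f, hf⟩ := Nat.sInf_mem hne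
  suffices h : distNum G ≤ d + 1 by omega
  apply Nat.sInf_le
  refine ⟨fun x => if h : x = v then Fin.last d else (f ⟨x, h⟩).castSucc, ?_⟩
  intro φ hφ
  have hv : φ v = v := by
    by_contra hne'
    have h1 := hφ v
    beta_reduce at h1
    replace h1 : (f ⟨φ v, hne'⟩).castSucc = Fin.last d :=
      (dif_neg hne').symm.trans (h1.trans (dif_pos rfl))
    exact (Fin.castSucc_lt_last _).ne h1
  have hfix : ∀ a : V, a = v ↔ φ a = v := by
    intro a
    constructor
    · rintro rfl; exact hv
    · intro h; have := φ.toEquiv.injective (h.trans hv.symm); exact this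
  set e : {u : V // u ≠ v} ≃ {u : V // u ≠ v} :=
    Equiv.subtypeEquiv φ.toEquiv (fun a => not_congr (hfix a)) with he
  have hA : ∀ a b : V, G.Adj (φ a) (φ b) ↔ G.Adj a b := fun a b => φ.map_rel_iff
  have hvx : ∀ a : V, G.Adj v (φ a) ↔ G.Adj v a := by
    intro a
    conv_lhs => rw [← hv]
    exact hA v a
  have hadj : ∀ x y : {u : V // u ≠ v},
      (G.vContract v).Adj (e x) (e y) ↔ (G.vContract v).Adj x y := by
    intro x y
    show (e x ≠ e y ∧ (G.Adj (e x).1 (e y).1 ∨ G.Adj v (e x).1 ∧ G.Adj v (e y).1)) ↔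
      (x ≠ y ∧ (G.Adj x.1 y.1 ∨ G.Adj v x.1 ∧ G.Adj v y.1))
    have hex : ((e x).1 : V) = φ x.1 := rfl
    have hey : ((e y).1 : V) = φ y.1 := rfl
    rw [ne_eq, e.injective.eq_iff, hex, hey, hA, hvx, hvx]
  let ψ : (G.vContract v) ≃g (G.vContract v) := ⟨e, fun {x y} => hadj x y⟩
  have hψ : ∀ x, ψ x = x := by
    apply hf
    intro x
    have h1 := hφ x.1
    have hx : (x : V) ≠ v := x.2
    have hφx : φ x.1 ≠ v := fun h => hx ((hfix x.1).mpr h)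
    beta_reduce at h1
    replace h1 : (f ⟨φ x.1, hφx⟩).castSucc = (f x).castSucc :=
      (dif_neg hφx).symm.trans (h1.trans (dif_neg hx))
    have : f ⟨φ x.1, hφx⟩ = f x := Fin.castSucc_injective _ h1
    convert this using 2
    rfl
  intro x
  by_cases hx : x = v
  · rw [hx, hv]
  · have := hψ ⟨x, hx⟩
    exact congrArg Subtype.val this
end

section
/- Let v be the central vertex of the star K_{1,n} with n ≥ 6. Then G ∘ v = K_n and D'(G ∘ v)/D'(G) = 2/n; hence the ratio D'(G ∘ v)/D'(G) can be made arbitrarily small. -/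
open SimpleGraph

lemma ifeq_iff {P Q : Prop} [Decidable P] [Decidable Q]
    (h : (if P then (0 : Fin 2) else 1) = (if Q then 0 else 1)) : P ↔ Q := by
  constructor
  · intro hP
    by_contra hQ
    rw [if_pos hP, if_neg hQ] at h
    exact absurd h (by decide)
  · intro hQ
    by_contra hP
    rw [if_neg hP, if_pos hQ] at h
    exact absurd h (by decide)


/-- The red relation on `ℕ`: path `0-1-…-(n-1)` plus chord `{1,3}`. -/
def pRel (x y : ℕ) : Prop := (x + 1 = y ∨ y + 1 = x) ∨ (x = 1 ∧ y = 3) ∨ (x = 3 ∧ y = 1)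

instance : ∀ x y, Decidable (pRel x y) := fun x y => by unfold pRel; infer_instance

lemma pRel_comm (x y : ℕ) : pRel x y ↔ pRel y x := by unfold pRel; tauto

lemma pRel_irrefl (x : ℕ) : ¬ pRel x x := by unfold pRel; omega

/-- `a` has three distinct `pRel`-neighbours. -/
def hasThree {n : ℕ} (a : Fin n) : Prop :=
  ∃ b c d : Fin n, b ≠ c ∧ b ≠ d ∧ c ≠ d ∧ pRel a.1 b.1 ∧ pRel a.1 c.1 ∧ pRel a.1 d.1

lemma hasThree_iff {n : ℕ} (σ : Fin n ≃ Fin n)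
    (key : ∀ a b : Fin n, pRel (σ a).1 (σ b).1 ↔ pRel a.1 b.1) (a : Fin n) :
    hasThree (σ a) ↔ hasThree a := by
  constructor
  · rintro ⟨b, c, d, hbc, hbd, hcd, hb, hc, hd⟩
    refine ⟨σ.symm b, σ.symm c, σ.symm d, fun h => hbc (by simpa using congrArg σ h),
      fun h => hbd (by simpa using congrArg σ h), fun h => hcd (by simpa using congrArg σ h),
      ?_, ?_, ?_⟩
    · rw [← key]; simpa using hb
    · rw [← key]; simpa using hc
    · rw [← key]; simpa using hd
  · rintro ⟨b, c, d, hbc, hbd, hcd, hb, hc, hd⟩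
    exact ⟨σ b, σ c, σ d, fun h => hbc (σ.injective h), fun h => hbd (σ.injective h),
      fun h => hcd (σ.injective h), (key a b).mpr hb, (key a c).mpr hc, (key a d).mpr hd⟩

lemma not_hasThree_two {n : ℕ} (h2 : 2 < n) : ¬ hasThree (⟨2, h2⟩ : Fin n) := by
  rintro ⟨b, c, d, hbc, hbd, hcd, hb, hc, hd⟩
  have h1 := Fin.val_ne_of_ne hbc
  have h2 := Fin.val_ne_of_ne hbd
  have h3 := Fin.val_ne_of_ne hcd
  unfold pRel at hb hc hd
  simp only [] at hb hc hd
  omega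

lemma not_hasThree_last {n : ℕ} (hn : 6 ≤ n) (h : n - 2 < n) :
    ¬ hasThree (⟨n - 2, h⟩ : Fin n) := by
  rintro ⟨b, c, d, hbc, hbd, hcd, hb, hc, hd⟩
  have h1 := Fin.val_ne_of_ne hbc
  have h2 := Fin.val_ne_of_ne hbd
  have h3 := Fin.val_ne_of_ne hcd
  have hb' := b.2; have hc' := c.2; have hd' := d.2
  have hb2 : pRel (n - 2) b.1 := hb
  have hc2 : pRel (n - 2) c.1 := hc
  have hd2 : pRel (n - 2) d.1 := hd
  unfold pRel at hb2 hc2 hd2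
  omega

lemma hasThree_one {n : ℕ} (hn : 6 ≤ n) (h : 1 < n) : hasThree (⟨1, h⟩ : Fin n) := by
  refine ⟨⟨0, by omega⟩, ⟨2, by omega⟩, ⟨3, by omega⟩, ?_, ?_, ?_, ?_, ?_, ?_⟩ <;>
    first
      | (intro hh; have := congrArg Fin.val hh; simp at this)
      | (show pRel _ _; unfold pRel; simp)

lemma hasThree_three {n : ℕ} (hn : 6 ≤ n) (h : 3 < n) : hasThree (⟨3, h⟩ : Fin n) := by
  refine ⟨⟨1, by omega⟩, ⟨2, by omega⟩, ⟨4, by omega⟩, ?_, ?_, ?_, ?_, ?_, ?_⟩ <;>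
    first
      | (intro hh; have := congrArg Fin.val hh; simp at this)
      | (show pRel _ _; unfold pRel; simp)

lemma sigma_id {n : ℕ} (hn : 6 ≤ n) (σ : Fin n ≃ Fin n)
    (key : ∀ a b : Fin n, pRel (σ a).1 (σ b).1 ↔ pRel a.1 b.1) :
    ∀ x : Fin n, σ x = x := by
  have main : ∀ k, ∀ hk : k < n, (σ ⟨k, hk⟩).1 = k := by
    intro k
    induction k using Nat.strong_induction_on with
    | _ k IH =>
    intro hk
    -- helper: injectivity transfer
    have inj : ∀ (j : ℕ) (hj : j < n), (∀ hj', (σ ⟨j, hj'⟩).1 = j) →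
        (σ ⟨k, hk⟩).1 = j → k = j := by
      intro j hj hfix hval
      have : σ ⟨k, hk⟩ = σ ⟨j, hj⟩ := Fin.ext (by rw [hval, hfix hj])
      have := σ.injective this
      exact congrArg Fin.val this
    match k with
    | 0 =>
      -- unique neighbour of σ 0 is σ 1
      have h1n : (1 : ℕ) < n := by omega
      have h01 : pRel ((σ ⟨0, hk⟩).1) ((σ ⟨1, h1n⟩).1) :=
        (key _ _).mpr (by unfold pRel; simp)
      have huniq : ∀ x : Fin n, pRel (σ ⟨0, hk⟩).1 x.1 → x = σ ⟨1, h1n⟩ := by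
        intro x hx
        have hx' : pRel (σ ⟨0, hk⟩).1 (σ (σ.symm x)).1 := by
          rwa [Equiv.apply_symm_apply]
        have h2 := (key _ _).mp hx'
        have h3 : (σ.symm x).1 = 1 := by
          have h2' : pRel 0 (σ.symm x).1 := h2
          unfold pRel at h2'; omega
        have : σ.symm x = ⟨1, h1n⟩ := Fin.ext h3
        rw [← this, Equiv.apply_symm_apply]
      set m := (σ ⟨0, hk⟩).1 with hm
      have hmlt : m < n := (σ ⟨0, hk⟩).2
      have hcases : m = 0 ∨ m = n - 1 := by
        by_contra hcon
        push_neg at hcon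
        have hma : pRel m (m - 1) := by unfold pRel; omega
        have hmb : pRel m (m + 1) := by unfold pRel; omega
        have e1 := huniq ⟨m - 1, by omega⟩ hma
        have e2 := huniq ⟨m + 1, by omega⟩ hmb
        rw [← e2] at e1
        have h5 : m - 1 = m + 1 := congrArg Fin.val e1
        omega
      rcases hcases with h | h
      · exact h
      · exfalso
        have hs1 : (σ ⟨1, h1n⟩).1 = n - 2 := by
          have h2 : pRel (n - 1) (σ ⟨1, h1n⟩).1 := by rw [← h]; exact h01
          have := (σ ⟨1, h1n⟩).2
          unfold pRel at h2; omega
        have hQ : hasThree (σ ⟨1, h1n⟩) :=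
          (hasThree_iff σ key _).mpr (hasThree_one hn h1n)
        have : σ ⟨1, h1n⟩ = ⟨n - 2, by omega⟩ := Fin.ext hs1
        rw [this] at hQ
        exact not_hasThree_last hn _ hQ
    | 1 =>
      have h0 : (0 : ℕ) < n := by omega
      have h01 : pRel ((σ ⟨0, h0⟩).1) ((σ ⟨1, hk⟩).1) :=
        (key _ _).mpr (by unfold pRel; simp)
      rw [IH 0 (by omega) h0] at h01
      have h2 : pRel 0 (σ ⟨1, hk⟩).1 := h01
      unfold pRel at h2; omega
    | 2 =>
      have h1 : (1 : ℕ) < n := by omega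
      have h12 : pRel ((σ ⟨1, h1⟩).1) ((σ ⟨2, hk⟩).1) :=
        (key _ _).mpr (by unfold pRel; simp)
      rw [IH 1 (by omega) h1] at h12
      have h2 : pRel 1 (σ ⟨2, hk⟩).1 := h12
      unfold pRel at h2
      have hne0 : (σ ⟨2, hk⟩).1 ≠ 0 := by
        intro h0
        have := inj 0 (by omega) (fun hj' => IH 0 (by omega) hj') h0
        omega
      have hne3 : (σ ⟨2, hk⟩).1 ≠ 3 := by
        intro h3
        have hQ : hasThree (σ ⟨2, hk⟩) := by
          have : σ ⟨2, hk⟩ = ⟨3, by omega⟩ := Fin.ext h3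
          rw [this]
          exact hasThree_three hn (by omega)
        rw [hasThree_iff σ key] at hQ
        exact not_hasThree_two hk hQ
      omega
    | 3 =>
      have h1 : (1 : ℕ) < n := by omega
      have h13 : pRel ((σ ⟨1, h1⟩).1) ((σ ⟨3, hk⟩).1) :=
        (key _ _).mpr (by unfold pRel; simp)
      rw [IH 1 (by omega) h1] at h13
      have h2 : pRel 1 (σ ⟨3, hk⟩).1 := h13
      unfold pRel at h2
      have hne0 : (σ ⟨3, hk⟩).1 ≠ 0 := by
        intro h0
        have := inj 0 (by omega) (fun hj' => IH 0 (by omega) hj') h0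
        omega
      have hne2 : (σ ⟨3, hk⟩).1 ≠ 2 := by
        intro h0
        have := inj 2 (by omega) (fun hj' => IH 2 (by omega) hj') h0
        omega
      omega
    | 4 =>
      have h3 : (3 : ℕ) < n := by omega
      have h34 : pRel ((σ ⟨3, h3⟩).1) ((σ ⟨4, hk⟩).1) :=
        (key _ _).mpr (by unfold pRel; simp)
      rw [IH 3 (by omega) h3] at h34
      have h2 : pRel 3 (σ ⟨4, hk⟩).1 := h34
      unfold pRel at h2
      have hne1 : (σ ⟨4, hk⟩).1 ≠ 1 := by
        intro h0
        have := inj 1 (by omega) (fun hj' => IH 1 (by omega) hj') h0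
        omega
      have hne2 : (σ ⟨4, hk⟩).1 ≠ 2 := by
        intro h0
        have := inj 2 (by omega) (fun hj' => IH 2 (by omega) hj') h0
        omega
      omega
    | (m + 5) =>
      have hk1 : m + 4 < n := by omega
      have hprev : pRel ((σ ⟨m + 4, hk1⟩).1) ((σ ⟨m + 5, hk⟩).1) :=
        (key _ _).mpr (show pRel (m + 4) (m + 5) by unfold pRel; omega)
      rw [IH (m + 4) (by omega) hk1] at hprev
      have h2 : pRel (m + 4) (σ ⟨m + 5, hk⟩).1 := hprev
      unfold pRel at h2
      have hne : (σ ⟨m + 5, hk⟩).1 ≠ m + 3 := by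
        intro h0
        have := inj (m + 3) (by omega) (fun hj' => IH (m + 3) (by omega) hj') h0
        omega
      omega
  intro x
  exact Fin.ext (by rw [main x.1 x.2])

/-- The distinguishing 2-colouring of `K_n`. -/
noncomputable def redF (n : ℕ) : Sym2 (Fin n) → Fin 2 :=
  Sym2.lift ⟨fun a b => if pRel a.1 b.1 then 0 else 1,
    fun a b => if_congr (pRel_comm a.1 b.1) rfl rfl⟩

lemma distIdx_top_fin (n : ℕ) (hn : 6 ≤ n) :
    distIdx (⊤ : SimpleGraph (Fin n)) = 2 := by
  have h2 : 2 ∈ {d : ℕ | ∃ f : Sym2 (Fin n) → Fin d,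
      ∀ φ : (⊤ : SimpleGraph (Fin n)) ≃g ⊤,
        (∀ e ∈ (⊤ : SimpleGraph (Fin n)).edgeSet, f (Sym2.map φ e) = f e) →
        ∀ x, φ x = x} := by
    refine ⟨redF n, fun φ hφ => ?_⟩
    have key : ∀ a b : Fin n, pRel (φ a).1 (φ b).1 ↔ pRel a.1 b.1 := by
      intro a b
      by_cases hab : a = b
      · subst hab
        constructor
        · intro h; exact absurd h (pRel_irrefl _)
        · intro h; exact absurd h (pRel_irrefl _)
      · have hmem : s(a, b) ∈ (⊤ : SimpleGraph (Fin n)).edgeSet := by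
          rw [SimpleGraph.mem_edgeSet]; exact hab
        have := hφ s(a, b) hmem
        rw [Sym2.map_pair_eq] at this
        simp only [redF, Sym2.lift_mk] at this
        exact ifeq_iff this
    exact sigma_id hn φ.toEquiv key
  refine le_antisymm (Nat.sInf_le h2) (le_csInf ⟨2, h2⟩ ?_)
  rintro d ⟨f, hf⟩
  by_contra hd
  push_neg at hd
  have hsub : Subsingleton (Fin d) := by
    interval_cases d <;> infer_instance
  have h0 : (0 : ℕ) < n := by omega
  have h1 : (1 : ℕ) < n := by omega
  let φ : (⊤ : SimpleGraph (Fin n)) ≃g ⊤ :=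
    Iso.completeGraph (Equiv.swap ⟨0, h0⟩ ⟨1, h1⟩)
  have := hf φ (fun e _ => Subsingleton.elim _ _) ⟨0, h0⟩
  have hswap : φ ⟨0, h0⟩ = ⟨1, h1⟩ := by
    show Equiv.swap (⟨0, h0⟩ : Fin n) ⟨1, h1⟩ ⟨0, h0⟩ = ⟨1, h1⟩
    exact Equiv.swap_apply_left _ _
  rw [hswap] at this
  have := congrArg Fin.val this
  simp at this

lemma distIdx_aux {V W : Type*} {G : SimpleGraph V} {H : SimpleGraph W} (e : G ≃g H) (d : ℕ)
    (h : ∃ f : Sym2 W → Fin d,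
      ∀ φ : H ≃g H, (∀ s ∈ H.edgeSet, f (Sym2.map φ s) = f s) → ∀ x, φ x = x) :
    ∃ f : Sym2 V → Fin d,
      ∀ φ : G ≃g G, (∀ s ∈ G.edgeSet, f (Sym2.map φ s) = f s) → ∀ x, φ x = x := by
  obtain ⟨f, hf⟩ := h
  refine ⟨fun s => f (Sym2.map e s), fun φ hφ x => ?_⟩
  let ψ : H ≃g H := e.comp (φ.comp e.symm)
  have hψ : ∀ s ∈ H.edgeSet, f (Sym2.map ψ s) = f s := by
    intro s hs
    have hmem : Sym2.map e.symm s ∈ G.edgeSet :=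
      (Iso.map_mem_edgeSet_iff e.symm).mpr hs
    have h1 := hφ (Sym2.map e.symm s) hmem
    have hco : Sym2.map ψ s = Sym2.map e (Sym2.map φ (Sym2.map e.symm s)) := by
      rw [Sym2.map_map, Sym2.map_map]
      rfl
    have h2 : Sym2.map e (Sym2.map e.symm s) = s := by
      rw [Sym2.map_map]
      have : (⇑e ∘ ⇑e.symm) = id := by
        funext y
        simp
      rw [this, Sym2.map_id, id]
    have h1' : f (Sym2.map e (Sym2.map φ (Sym2.map e.symm s))) =
        f (Sym2.map e (Sym2.map e.symm s)) := h1
    rw [hco, h1', h2]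
  have hid := hf ψ hψ
  have h3 : ψ (e x) = e x := hid (e x)
  have h4 : e (φ x) = e x := by
    rw [← h3]
    show e (φ x) = e (φ (e.symm (e x)))
    rw [RelIso.symm_apply_apply]
  exact e.injective h4

lemma distIdx_iso {V W : Type*} {G : SimpleGraph V} {H : SimpleGraph W} (e : G ≃g H) :
    distIdx G = distIdx H := by
  unfold distIdx
  congr 1
  ext d
  exact ⟨fun h => distIdx_aux e.symm d h, fun h => distIdx_aux e d h⟩

lemma star_edge {n : ℕ} {e : Sym2 (Fin 1 ⊕ Fin n)} :
    e ∈ (starG n).edgeSet ↔ ∃ j : Fin n, e = s(Sum.inl 0, Sum.inr j) := by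
  induction e using Sym2.ind with
  | _ a b =>
    rw [SimpleGraph.mem_edgeSet]
    cases a with
    | inl i =>
      cases b with
      | inl i' => simp [starG, Sym2.eq_iff]
      | inr j =>
        simp only [starG, completeBipartiteGraph_adj]
        constructor
        · intro _
          exact ⟨j, by rw [Fin.eq_zero i]⟩
        · intro _
          simp
    | inr j =>
      cases b with
      | inl i =>
        simp only [starG, completeBipartiteGraph_adj]
        constructor
        · intro _
          exact ⟨j, by rw [Fin.eq_zero i, Sym2.eq_swap]⟩
        · intro _
          simp
      | inr j' => simp [starG, Sym2.eq_iff]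

lemma star_center_fixed {n : ℕ} (hn : 6 ≤ n) (φ : starG n ≃g starG n) :
    φ (Sum.inl 0) = Sum.inl 0 := by
  cases h : φ (Sum.inl 0) with
  | inl i => rw [Fin.eq_zero i]
  | inr j =>
    exfalso
    have adj0 : (starG n).Adj (Sum.inl 0) (Sum.inr ⟨0, by omega⟩) := by
      simp [starG]
    have adj1 : (starG n).Adj (Sum.inl 0) (Sum.inr ⟨1, by omega⟩) := by
      simp [starG]
    have h0 : (starG n).Adj (Sum.inr j) (φ (Sum.inr ⟨0, by omega⟩)) := by
      rw [← h]; exact φ.map_rel_iff.mpr adj0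
    have h1 : (starG n).Adj (Sum.inr j) (φ (Sum.inr ⟨1, by omega⟩)) := by
      rw [← h]; exact φ.map_rel_iff.mpr adj1
    have e0 : φ (Sum.inr ⟨0, by omega⟩) = Sum.inl 0 := by
      cases h' : φ (Sum.inr ⟨0, by omega⟩) with
      | inl i => rw [Fin.eq_zero i]
      | inr j' => rw [h'] at h0; simp [starG] at h0
    have e1 : φ (Sum.inr ⟨1, by omega⟩) = Sum.inl 0 := by
      cases h' : φ (Sum.inr ⟨1, by omega⟩) with
      | inl i => rw [Fin.eq_zero i]
      | inr j' => rw [h'] at h1; simp [starG] at h1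
    rw [← e1] at e0
    have := φ.injective e0
    have := (Sum.inr.injEq _ _).mp this
    have := congrArg Fin.val this
    simp at this

/-- colour of an edge of the star -/
noncomputable def starF (n : ℕ) (hn : 0 < n) : Sym2 (Fin 1 ⊕ Fin n) → Fin n :=
  Sym2.lift ⟨fun x y =>
    match x, y with
    | .inl _, .inl _ => ⟨0, hn⟩
    | .inl _, .inr j => j
    | .inr j, .inl _ => j
    | .inr i, .inr j => max i j,
    by rintro (a | a) (b | b) <;> simp [max_comm]⟩

lemma distIdx_star (n : ℕ) (hn : 6 ≤ n) : distIdx (starG n) = n := by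
  have h0n : 0 < n := by omega
  have hmem : n ∈ {d : ℕ | ∃ f : Sym2 (Fin 1 ⊕ Fin n) → Fin d,
      ∀ φ : starG n ≃g starG n,
        (∀ e ∈ (starG n).edgeSet, f (Sym2.map φ e) = f e) → ∀ x, φ x = x} := by
    refine ⟨starF n h0n, fun φ hφ => ?_⟩
    have hc := star_center_fixed hn φ
    have hleaf : ∀ j : Fin n, φ (Sum.inr j) = Sum.inr j := by
      intro j
      have hadj : (starG n).Adj (Sum.inl 0) (Sum.inr j) := by simp [starG]
      have h2 : (starG n).Adj (Sum.inl 0) (φ (Sum.inr j)) := by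
        rw [← hc]; exact φ.map_rel_iff.mpr hadj
      cases h' : φ (Sum.inr j) with
      | inl i =>
        exfalso
        rw [Fin.eq_zero i, ← hc] at h'
        have := φ.injective h'
        simp at this
      | inr k =>
        have hedge : s(Sum.inl 0, Sum.inr j) ∈ (starG n).edgeSet :=
          star_edge.mpr ⟨j, rfl⟩
        have := hφ _ hedge
        rw [Sym2.map_pair_eq, hc, h'] at this
        simp only [starF, Sym2.lift_mk] at this
        rw [this]
    intro x
    cases x with
    | inl i => rw [Fin.eq_zero i]; exact hc
    | inr j => exact hleaf j
  refine le_antisymm (Nat.sInf_le hmem) (le_csInf ⟨n, hmem⟩ ?_)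
  rintro d ⟨f, hf⟩
  by_contra hd
  push_neg at hd
  obtain ⟨i, j, hij, hcij⟩ := Fintype.exists_ne_map_eq_of_card_lt
    (fun j : Fin n => f s(Sum.inl 0, Sum.inr j)) (by simpa using hd)
  have hsw : ∀ x : Fin 1 ⊕ Fin n,
      (Equiv.swap (Sum.inr i : Fin 1 ⊕ Fin n) (Sum.inr j) x).isLeft = x.isLeft ∧
      (Equiv.swap (Sum.inr i : Fin 1 ⊕ Fin n) (Sum.inr j) x).isRight = x.isRight := by
    intro x
    cases x with
    | inl a => rw [Equiv.swap_apply_of_ne_of_ne (by simp) (by simp)]; simp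
    | inr a =>
      by_cases h1 : a = i
      · subst h1; rw [Equiv.swap_apply_left]; simp
      · by_cases h2 : a = j
        · subst h2; rw [Equiv.swap_apply_right]; simp
        · rw [Equiv.swap_apply_of_ne_of_ne (by simp [h1]) (by simp [h2])]; simp
  let φ : starG n ≃g starG n := by
    refine ⟨Equiv.swap (Sum.inr i) (Sum.inr j), ?_⟩
    intro x y
    show (starG n).Adj (Equiv.swap _ _ x) (Equiv.swap _ _ y) ↔ (starG n).Adj x y
    simp only [starG, completeBipartiteGraph_adj]
    rw [(hsw x).1, (hsw y).1, (hsw x).2, (hsw y).2]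
  have pres : ∀ e ∈ (starG n).edgeSet, f (Sym2.map φ e) = f e := by
    intro e he
    obtain ⟨k, rfl⟩ := star_edge.mp he
    rw [Sym2.map_pair_eq]
    have hc : φ (Sum.inl 0) = Sum.inl 0 := by
      show Equiv.swap (Sum.inr i : Fin 1 ⊕ Fin n) (Sum.inr j) (Sum.inl 0) = Sum.inl 0
      exact Equiv.swap_apply_of_ne_of_ne (by simp) (by simp)
    rw [hc]
    by_cases h1 : k = i
    · subst h1
      have hk : φ (Sum.inr k) = Sum.inr j := by
        show Equiv.swap (Sum.inr k : Fin 1 ⊕ Fin n) (Sum.inr j) (Sum.inr k) = Sum.inr j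
        exact Equiv.swap_apply_left _ _
      rw [hk]
      exact hcij.symm
    · by_cases h2 : k = j
      · subst h2
        have hk : φ (Sum.inr k) = Sum.inr i := by
          show Equiv.swap (Sum.inr i : Fin 1 ⊕ Fin n) (Sum.inr k) (Sum.inr k) = Sum.inr i
          exact Equiv.swap_apply_right _ _
        rw [hk]
        exact hcij
      · have hk : φ (Sum.inr k) = Sum.inr k := by
          show Equiv.swap (Sum.inr i : Fin 1 ⊕ Fin n) (Sum.inr j) (Sum.inr k) = Sum.inr k
          exact Equiv.swap_apply_of_ne_of_ne (by simp [h1]) (by simp [h2])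
        rw [hk]
  have hfix := hf φ pres (Sum.inr i)
  have h2 : (Sum.inr j : Fin 1 ⊕ Fin n) = Sum.inr i := by
    rw [← hfix]
    show Sum.inr j = Equiv.swap (Sum.inr i : Fin 1 ⊕ Fin n) (Sum.inr j) (Sum.inr i)
    exact (Equiv.swap_apply_left _ _).symm
  simp only [Sum.inr.injEq] at h2
  exact hij h2.symm

lemma star_vContract (n : ℕ) :
    (starG n).vContract (Sum.inl 0) = ⊤ := by
  ext x y
  have hx : ∃ j : Fin n, x.1 = Sum.inr j := by
    cases hx1 : x.1 with
    | inl i => exact absurd (by rw [hx1, Fin.eq_zero i]) x.2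
    | inr j => exact ⟨j, rfl⟩
  have hy : ∃ j : Fin n, y.1 = Sum.inr j := by
    cases hy1 : y.1 with
    | inl i => exact absurd (by rw [hy1, Fin.eq_zero i]) y.2
    | inr j => exact ⟨j, rfl⟩
  obtain ⟨jx, hjx⟩ := hx
  obtain ⟨jy, hjy⟩ := hy
  show (x ≠ y ∧ _) ↔ _
  rw [SimpleGraph.top_adj]
  constructor
  · exact fun h => h.1
  · intro h
    refine ⟨h, Or.inr ⟨?_, ?_⟩⟩
    · rw [hjx]; simp [starG]
    · rw [hjy]; simp [starG]

/-- The vertices of the contracted star are equivalent to `Fin n`. -/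
def starEquiv (n : ℕ) (hn : 0 < n) :
    Fin n ≃ {u : Fin 1 ⊕ Fin n // u ≠ Sum.inl 0} where
  toFun j := ⟨Sum.inr j, by simp⟩
  invFun u := Sum.elim (fun _ => ⟨0, hn⟩) id u.1
  left_inv j := rfl
  right_inv := by
    rintro ⟨(i | j), h⟩
    · exact absurd (by rw [Fin.eq_zero i]) h
    · rfl

lemma ratio_eq (n : ℕ) (hn : 6 ≤ n) :
    (starG n).vContract (Sum.inl 0) = ⊤ ∧
      (distIdx ((starG n).vContract (Sum.inl 0)) : ℝ) / (distIdx (starG n) : ℝ)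
        = 2 / n := by
  have h0n : 0 < n := by omega
  have htop := star_vContract n
  refine ⟨htop, ?_⟩
  have h1 : distIdx ((starG n).vContract (Sum.inl 0)) = 2 := by
    rw [htop, ← distIdx_iso (Iso.completeGraph (starEquiv n h0n)), distIdx_top_fin n hn]
  rw [h1, distIdx_star n hn]
  norm_num

theorem stmt16 :
    (∀ n : ℕ, 6 ≤ n →
      (starG n).vContract (Sum.inl 0) = ⊤ ∧
      (distIdx ((starG n).vContract (Sum.inl 0)) : ℝ) / (distIdx (starG n) : ℝ)
        = 2 / n) ∧
    (∀ ε : ℝ, 0 < ε → ∃ (V : Type) (_ : Fintype V) (G : SimpleGraph V) (v : V),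
      (distIdx (G.vContract v) : ℝ) / (distIdx G : ℝ) < ε) := by
  refine ⟨fun n hn => ratio_eq n hn, fun ε hε => ?_⟩
  obtain ⟨m, hm⟩ := exists_nat_gt (2 / ε)
  set N := max m 6 with hN
  have hN6 : 6 ≤ N := le_max_right _ _
  have hNm : (m : ℝ) ≤ N := by exact_mod_cast le_max_left _ _
  refine ⟨Fin 1 ⊕ Fin N, inferInstance, starG N, Sum.inl 0, ?_⟩
  rw [(ratio_eq N hN6).2]
  have hNpos : (0 : ℝ) < N := by positivity
  rw [div_lt_iff₀ hNpos]
  have h2 : 2 / ε < (N : ℝ) := lt_of_lt_of_le hm hNm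
  calc (2 : ℝ) = (2 / ε) * ε := by field_simp
    _ < (N : ℝ) * ε := by
        exact mul_lt_mul_of_pos_right h2 hε
    _ = ε * N := mul_comm _ _
end
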